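/- (Reciprocal relation for the q-shuffle.) For all words u, v, w ∈ A* with |w| = |u| + |v|, the coefficient polynomial ⟨u ⧢_q v, w⟩ has degree at most |u|·|v| and satisfies ⟨u ⧢_q v, w⟩ = reflect_{|u|·|v|}(⟨v ⧢_q u, w⟩), where for a polynomial P of degree at most N, reflect_N(P) denotes the polynomial q^N·P(1/q), i.e., the polynomial whose coefficient of q^i is the coefficient of q^{N−i} in P. -/

import Mathlib

noncomputable def qShuffleAux {A : Type*} [DecidableEq A] :
    List A → List A → (List A →₀ Polynomial ℕ)
  | [], v => Finsupp.single v 1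
  | a :: u, [] => Finsupp.single (a :: u) 1
  | a :: u, b :: v =>
      (Polynomial.X : Polynomial ℕ) ^ (v.length + 1) •
          Finsupp.mapDomain (a :: ·) (qShuffleAux u (b :: v)) +
        Finsupp.mapDomain (b :: ·) (qShuffleAux (a :: u) v)

/-- The `q`-shuffle `u ⧢_q v` of two words. -/
noncomputable def qShuffle {A : Type*} [DecidableEq A] (u v : List A) :
    List A →₀ Polynomial ℕ :=
  Finsupp.mapDomain List.reverse (qShuffleAux u.reverse v.reverse)

lemma reflect_zero' (p : Polynomial ℕ) : p.reflect 0 = p := by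
  ext i
  rw [Polynomial.coeff_reflect]
  congr 1
  rcases Nat.eq_zero_or_pos i with hi | hi
  · subst hi; simp
  · exact Polynomial.revAt_eq_self_of_lt hi

lemma reflect_shift (n M : ℕ) (P : Polynomial ℕ) (hP : P.natDegree ≤ M) :
    Polynomial.reflect (n + M) P = Polynomial.X ^ n * Polynomial.reflect M P := by
  have h := Polynomial.reflect_mul (Polynomial.X ^ 0 : Polynomial ℕ) P
    (F := n) (G := M) (by simp) hP
  simpa [Polynomial.reflect_monomial] using h

lemma mapDomain_cons_apply {A : Type*} [DecidableEq A] (a c : A)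
    (s : List A →₀ Polynomial ℕ) (w : List A) :
    Finsupp.mapDomain (a :: ·) s (c :: w) = if a = c then s w else 0 := by
  by_cases hac : a = c
  · subst hac
    rw [if_pos rfl]
    exact Finsupp.mapDomain_apply (fun x y hxy => by simpa using hxy) s w
  · rw [if_neg hac]
    apply Finsupp.mapDomain_notin_range
    rintro ⟨x, hx⟩
    exact hac ((List.cons.injEq _ _ _ _).mp hx).1

lemma single_apply_natDegree {A : Type*} [DecidableEq A] (v w : List A) :
    ((Finsupp.single v (1 : Polynomial ℕ)) w).natDegree = 0 := by
  rw [Finsupp.single_apply]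
  split <;> simp

lemma qShuffleAux_nil_right {A : Type*} [DecidableEq A] (v : List A) :
    qShuffleAux v [] = Finsupp.single v 1 := by
  cases v <;> simp [qShuffleAux]

theorem qShuffleAux_key {A : Type*} [DecidableEq A] :
    ∀ (u v w : List A), w.length = u.length + v.length →
    (qShuffleAux u v w).natDegree ≤ u.length * v.length ∧
    qShuffleAux u v w =
      Polynomial.reflect (u.length * v.length) (qShuffleAux v u w)
  | [], v, w, _ => by
    simp only [qShuffleAux, qShuffleAux_nil_right, List.length_nil, Nat.zero_mul, reflect_zero']
    exact ⟨le_of_eq (single_apply_natDegree v w), trivial⟩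
  | a :: u, [], w, _ => by
    simp only [qShuffleAux, qShuffleAux_nil_right, List.length_nil, Nat.mul_zero, reflect_zero']
    exact ⟨le_of_eq (single_apply_natDegree (a :: u) w), trivial⟩
  | a :: u, b :: v, w, h => by
    match w with
    | [] => simp at h
    | c :: w' =>
      have hw' : w'.length = u.length + v.length + 1 := by
        simp at h; omega
      have IH1 := qShuffleAux_key u (b :: v) w' (by simp; omega)
      have IH2 := qShuffleAux_key (a :: u) v w' (by simp; omega)
      have IH3 := qShuffleAux_key (b :: v) u w' (by simp; omega)
      have IH4 := qShuffleAux_key v (a :: u) w' (by simp; omega)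
      simp only [qShuffleAux, Finsupp.add_apply, Finsupp.smul_apply, smul_eq_mul,
        mapDomain_cons_apply, List.length_cons]
      set lu := u.length
      set lv := v.length
      split_ifs with hac hbc hbc
      · constructor
        · refine le_trans (Polynomial.natDegree_add_le _ _) (max_le ?_ ?_)
          · refine le_trans (Polynomial.natDegree_mul_le) ?_
            have := IH1.1
            simp only [List.length_cons] at this
            rw [Polynomial.natDegree_X_pow]
            nlinarith
          · have := IH2.1
            simp only [List.length_cons] at this
            nlinarith
        · rw [Polynomial.reflect_add]
          have e1 : (lu + 1) * (lv + 1) = (lu + 1) + (lu + 1) * lv := by ring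
          have e2 : (lu + 1) * (lv + 1) = (lv + 1) + (lv + 1) * lu := by ring
          rw [show (Polynomial.X : Polynomial ℕ) ^ (lu + 1) *
              (qShuffleAux v (a :: u)) w' =
              (Polynomial.X : Polynomial ℕ) ^ (lu + 1) *
              (qShuffleAux v (a :: u)) w' from rfl]
          have h1 : Polynomial.reflect ((lu + 1) * (lv + 1))
              ((Polynomial.X : Polynomial ℕ) ^ (lu + 1) *
                (qShuffleAux v (a :: u)) w') = (qShuffleAux (a :: u) v) w' := by
            rw [e1, Polynomial.reflect_mul _ _ (le_of_eq (Polynomial.natDegree_X_pow _))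
              (by simpa [Nat.mul_comm] using IH4.1), Polynomial.reflect_monomial,
              Polynomial.revAt_le (le_refl _), Nat.sub_self, pow_zero, one_mul]
            have := IH2.2
            simp only [List.length_cons] at this
            rw [this]
          have h2 : Polynomial.reflect ((lu + 1) * (lv + 1))
              ((qShuffleAux (b :: v) u) w') =
              Polynomial.X ^ (lv + 1) * (qShuffleAux u (b :: v)) w' := by
            rw [e2, reflect_shift _ _ _ (by simpa [Nat.mul_comm] using IH3.1)]
            have := IH1.2
            simp only [List.length_cons] at this
            rw [Nat.mul_comm] at this
            rw [← this]
          rw [h1, h2, add_comm]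
      · simp only [mul_zero, add_zero, zero_add]
        constructor
        · refine le_trans Polynomial.natDegree_mul_le ?_
          have := IH1.1
          simp only [List.length_cons] at this
          rw [Polynomial.natDegree_X_pow]
          nlinarith
        · have e2 : (lu + 1) * (lv + 1) = (lv + 1) + (lv + 1) * lu := by ring
          rw [e2, reflect_shift _ _ _ (by simpa [Nat.mul_comm] using IH3.1)]
          have := IH1.2
          simp only [List.length_cons] at this
          rw [Nat.mul_comm] at this
          rw [← this]
      · simp only [mul_zero, add_zero, zero_add]
        constructor
        · have := IH2.1
          simp only [List.length_cons] at this
          nlinarith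
        · have e1 : (lu + 1) * (lv + 1) = (lu + 1) + (lu + 1) * lv := by ring
          rw [e1, Polynomial.reflect_mul _ _ (le_of_eq (Polynomial.natDegree_X_pow _))
            (by simpa [Nat.mul_comm] using IH4.1), Polynomial.reflect_monomial,
            Polynomial.revAt_le (le_refl _), Nat.sub_self, pow_zero, one_mul]
          have := IH2.2
          simp only [List.length_cons] at this
          rw [this]
      · simp only [mul_zero, add_zero, zero_add]
        simp [Polynomial.reflect_zero]
  termination_by u v => u.length + v.length

theorem qShuffle_reciprocal (A : Type*) [Fintype A] [DecidableEq A]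
    (u v w : List A) (h : w.length = u.length + v.length) :
    (qShuffle u v w).natDegree ≤ u.length * v.length ∧
    qShuffle u v w = Polynomial.reflect (u.length * v.length) (qShuffle v u w) := by
  have hrev : ∀ (x y : List A), qShuffle x y w = qShuffleAux x.reverse y.reverse w.reverse := by
    intro x y
    unfold qShuffle
    conv_lhs => rw [show w = w.reverse.reverse by simp]
    exact Finsupp.mapDomain_apply List.reverse_injective _ _
  rw [hrev, hrev]
  have key := qShuffleAux_key u.reverse v.reverse w.reverse (by simpa using h)
  simpa using key
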